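/- In the digraph TT, if P is a directed path from a to a_i for some i in {1,2}, Q is a directed path from b_j to b for some j in {1,2}, and P and Q are arc-disjoint, then i = j. -/

import Mathlib

namespace TwoPairs

/-- Directed walks in a digraph given by its adjacency relation `A`. -/
inductive DWalk {V : Type*} (A : V → V → Prop) : V → V → Type _
  | nil (v : V) : DWalk A v v
  | cons {u v w : V} : A u v → DWalk A v w → DWalk A u w

variable {V : Type*} {A : V → V → Prop}

/-- The list of arcs of a directed walk. -/
def DWalk.arcs : {u v : V} → DWalk A u v → List (V × V)
  | _, _, .nil _ => []
  | u, _, .cons (v := m) _ q => (u, m) :: q.arcs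

/-- A directed path is a directed walk with pairwise distinct arcs. -/
def DWalk.IsTrail {u v : V} (P : DWalk A u v) : Prop := P.arcs.Nodup

/-- Two directed paths are arc-disjoint if they share no arc. -/
def ArcDisjoint {u v u' v' : V} (P : DWalk A u v) (Q : DWalk A u' v') : Prop :=
  ∀ e ∈ P.arcs, e ∉ Q.arcs

end TwoPairs

namespace TwoPairs

/-- The vertices of the digraph `TT`. -/
inductive VTT : Type
  | a | b | a1 | a2 | b1 | b2
  | T1 | T2 | T3 | T4 | T5 | T6 | T7 | T8 | T9 | T10
  deriving DecidableEq

open VTT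

/-- The arcs of the digraph `TT`. -/
def arcsTT : List (VTT × VTT) :=
  [(a,T2),(b1,T1),(b2,T3),(T2,T1),(T2,T7),(T1,T4),(T4,T3),(T4,T6),(T3,T5),
   (T3,a2),(T7,T6),(T6,T5),(T6,T10),(T5,T8),(T8,T9),(T8,a1),(T10,T9),(T9,b)]

/-- Adjacency relation of `TT`. -/
def AdjTT (x y : VTT) : Prop := (x, y) ∈ arcsTT

/-- `aTgt 0 = a1`, `aTgt 1 = a2`. -/
def aTgt : Fin 2 → VTT
  | 0 => a1 | 1 => a2

/-- `bSrc 0 = b1`, `bSrc 1 = b2`. -/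
def bSrc : Fin 2 → VTT
  | 0 => b1 | 1 => b2


section Aux

/-! Auxiliary lemmas: forced arcs in walks of `TT`. -/

-- No-walk lemmas (targets unreachable)
private theorem noW_b_a1 (w : DWalk AdjTT b a1) : False := by
  cases w with | cons h q => simp [AdjTT, arcsTT] at h

private theorem noW_a2_a1 (w : DWalk AdjTT a2 a1) : False := by
  cases w with | cons h q => simp [AdjTT, arcsTT] at h

private theorem noW_T9_a1 (w : DWalk AdjTT T9 a1) : False := by
  cases w with
  | cons h q => simp [AdjTT, arcsTT] at h; subst h; exact noW_b_a1 q

private theorem noW_T10_a1 (w : DWalk AdjTT T10 a1) : False := by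
  cases w with
  | cons h q => simp [AdjTT, arcsTT] at h; subst h; exact noW_T9_a1 q

private theorem noW_b_a2 (w : DWalk AdjTT b a2) : False := by
  cases w with | cons h q => simp [AdjTT, arcsTT] at h

private theorem noW_a1_a2 (w : DWalk AdjTT a1 a2) : False := by
  cases w with | cons h q => simp [AdjTT, arcsTT] at h

private theorem noW_T9_a2 (w : DWalk AdjTT T9 a2) : False := by
  cases w with
  | cons h q => simp [AdjTT, arcsTT] at h; subst h; exact noW_b_a2 q

private theorem noW_T8_a2 (w : DWalk AdjTT T8 a2) : False := by
  cases w with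
  | cons h q =>
    simp [AdjTT, arcsTT] at h
    rcases h with rfl | rfl
    · exact noW_T9_a2 q
    · exact noW_a1_a2 q

private theorem noW_T5_a2 (w : DWalk AdjTT T5 a2) : False := by
  cases w with
  | cons h q => simp [AdjTT, arcsTT] at h; subst h; exact noW_T8_a2 q

private theorem noW_T10_a2 (w : DWalk AdjTT T10 a2) : False := by
  cases w with
  | cons h q => simp [AdjTT, arcsTT] at h; subst h; exact noW_T9_a2 q

private theorem noW_T6_a2 (w : DWalk AdjTT T6 a2) : False := by
  cases w with
  | cons h q =>
    simp [AdjTT, arcsTT] at h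
    rcases h with rfl | rfl
    · exact noW_T5_a2 q
    · exact noW_T10_a2 q

private theorem noW_T7_a2 (w : DWalk AdjTT T7 a2) : False := by
  cases w with
  | cons h q => simp [AdjTT, arcsTT] at h; subst h; exact noW_T6_a2 q

private theorem noW_a2_b (w : DWalk AdjTT a2 b) : False := by
  cases w with | cons h q => simp [AdjTT, arcsTT] at h

-- Every walk from these vertices to `a1` uses the arc `(T5, T8)`.
private theorem mem_T5_a1 (w : DWalk AdjTT T5 a1) : (T5, T8) ∈ w.arcs := by
  cases w with
  | cons h q =>
    simp [AdjTT, arcsTT] at h; subst h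
    exact List.mem_cons_self

private theorem mem_T6_a1 (w : DWalk AdjTT T6 a1) : (T5, T8) ∈ w.arcs := by
  cases w with
  | cons h q =>
    simp [AdjTT, arcsTT] at h
    rcases h with rfl | rfl
    · exact List.mem_cons_of_mem _ (mem_T5_a1 q)
    · exact (noW_T10_a1 q).elim

private theorem mem_T3_a1 (w : DWalk AdjTT T3 a1) : (T5, T8) ∈ w.arcs := by
  cases w with
  | cons h q =>
    simp [AdjTT, arcsTT] at h
    rcases h with rfl | rfl
    · exact List.mem_cons_of_mem _ (mem_T5_a1 q)
    · exact (noW_a2_a1 q).elim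

private theorem mem_T4_a1 (w : DWalk AdjTT T4 a1) : (T5, T8) ∈ w.arcs := by
  cases w with
  | cons h q =>
    simp [AdjTT, arcsTT] at h
    rcases h with rfl | rfl
    · exact List.mem_cons_of_mem _ (mem_T3_a1 q)
    · exact List.mem_cons_of_mem _ (mem_T6_a1 q)

private theorem mem_T1_a1 (w : DWalk AdjTT T1 a1) : (T5, T8) ∈ w.arcs := by
  cases w with
  | cons h q =>
    simp [AdjTT, arcsTT] at h; subst h
    exact List.mem_cons_of_mem _ (mem_T4_a1 q)

private theorem mem_T7_a1 (w : DWalk AdjTT T7 a1) : (T5, T8) ∈ w.arcs := by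
  cases w with
  | cons h q =>
    simp [AdjTT, arcsTT] at h; subst h
    exact List.mem_cons_of_mem _ (mem_T6_a1 q)

private theorem mem_T2_a1 (w : DWalk AdjTT T2 a1) : (T5, T8) ∈ w.arcs := by
  cases w with
  | cons h q =>
    simp [AdjTT, arcsTT] at h
    rcases h with rfl | rfl
    · exact List.mem_cons_of_mem _ (mem_T1_a1 q)
    · exact List.mem_cons_of_mem _ (mem_T7_a1 q)

private theorem mem_a_a1 (w : DWalk AdjTT a a1) : (T5, T8) ∈ w.arcs := by
  cases w with
  | cons h q =>
    simp [AdjTT, arcsTT] at h; subst h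
    exact List.mem_cons_of_mem _ (mem_T2_a1 q)

-- Every walk from `b2` to `b` uses the arc `(T5, T8)`.
private theorem mem_T5_b (w : DWalk AdjTT T5 b) : (T5, T8) ∈ w.arcs := by
  cases w with
  | cons h q =>
    simp [AdjTT, arcsTT] at h; subst h
    exact List.mem_cons_self

private theorem mem_T3_b (w : DWalk AdjTT T3 b) : (T5, T8) ∈ w.arcs := by
  cases w with
  | cons h q =>
    simp [AdjTT, arcsTT] at h
    rcases h with rfl | rfl
    · exact List.mem_cons_of_mem _ (mem_T5_b q)
    · exact (noW_a2_b q).elim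

private theorem mem_b2_b (w : DWalk AdjTT b2 b) : (T5, T8) ∈ w.arcs := by
  cases w with
  | cons h q =>
    simp [AdjTT, arcsTT] at h; subst h
    exact List.mem_cons_of_mem _ (mem_T3_b q)

-- Every walk from `a` to `a2` uses the arc `(T1, T4)`.
private theorem mem_T1_a2 (w : DWalk AdjTT T1 a2) : (T1, T4) ∈ w.arcs := by
  cases w with
  | cons h q =>
    simp [AdjTT, arcsTT] at h; subst h
    exact List.mem_cons_self

private theorem mem_T2_a2 (w : DWalk AdjTT T2 a2) : (T1, T4) ∈ w.arcs := by
  cases w with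
  | cons h q =>
    simp [AdjTT, arcsTT] at h
    rcases h with rfl | rfl
    · exact List.mem_cons_of_mem _ (mem_T1_a2 q)
    · exact (noW_T7_a2 q).elim

private theorem mem_a_a2 (w : DWalk AdjTT a a2) : (T1, T4) ∈ w.arcs := by
  cases w with
  | cons h q =>
    simp [AdjTT, arcsTT] at h; subst h
    exact List.mem_cons_of_mem _ (mem_T2_a2 q)

-- Every walk from `b1` to `b` uses the arc `(T1, T4)`.
private theorem mem_T1_b (w : DWalk AdjTT T1 b) : (T1, T4) ∈ w.arcs := by
  cases w with
  | cons h q =>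
    simp [AdjTT, arcsTT] at h; subst h
    exact List.mem_cons_self

private theorem mem_b1_b (w : DWalk AdjTT b1 b) : (T1, T4) ∈ w.arcs := by
  cases w with
  | cons h q =>
    simp [AdjTT, arcsTT] at h; subst h
    exact List.mem_cons_of_mem _ (mem_T1_b q)

end Aux

/-- in the digraph `TT`, if `P` is a directed path from `a` to `a_i`,
`Q` is a directed path from `b_j` to `b`, and `P` and `Q` are arc-disjoint, then `i = j`. -/
theorem statement14 (i j : Fin 2)
    (P : DWalk AdjTT VTT.a (aTgt i)) (Q : DWalk AdjTT (bSrc j) VTT.b)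
    (hP : P.IsTrail) (hQ : Q.IsTrail) (hPQ : ArcDisjoint P Q) : i = j := by
  fin_cases i <;> fin_cases j
  · rfl
  · exact absurd (mem_b2_b Q) (hPQ (T5, T8) (mem_a_a1 P))
  · exact absurd (mem_b1_b Q) (hPQ (T1, T4) (mem_a_a2 P))
  · rfl

end TwoPairs
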